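/- arXiv:1804.08295 — 4 statements merged into one kernel-verified Lean document; each statement's English description precedes it below -/
import Mathlib

section
/- Let H be a Hilbert space with orthogonal decomposition H = ⊕_{n≥0} H⁽ⁿ⁾, and let G be a bounded operator on H mapping each H⁽ⁿ⁾ into H⁽ⁿ⁺¹⁾ such that there is C > 0 with ‖G ψ‖ ≤ C (n+1)^{-1/4} ‖ψ‖ for all ψ ∈ H⁽ⁿ⁾. Then 1 - G is boundedly invertible on H, with inverse (1-G)^{-1} = Σ_{j≥0} G^j, and ‖(1-G)^{-1}‖ ≤ Σ_{j≥0} C^j/(j!)^{1/4} < ∞. -/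
open scoped BigOperators

section Helpers

variable {H : Type*} [NormedAddCommGroup H] [InnerProductSpace ℂ H]

lemma my_norm_sum_sq (f : ℕ → H)
    (ho : ∀ n m, n ≠ m → (inner ℂ (f n) (f m) : ℂ) = 0) (s : Finset ℕ) :
    ‖∑ i ∈ s, f i‖ ^ 2 = ∑ i ∈ s, ‖f i‖ ^ 2 := by
  have key : (inner ℂ (∑ i ∈ s, f i) (∑ i ∈ s, f i) : ℂ) = ∑ i ∈ s, inner ℂ (f i) (f i) := by
    rw [sum_inner]
    refine Finset.sum_congr rfl fun i hi => ?_
    rw [inner_sum, Finset.sum_eq_single i]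
    · intro b hb hbi
      exact ho i b (Ne.symm hbi)
    · intro h; exact absurd hi h
  have h1 : ‖∑ i ∈ s, f i‖ ^ 2 = RCLike.re (inner ℂ (∑ i ∈ s, f i) (∑ i ∈ s, f i) : ℂ) :=
    norm_sq_eq_re_inner (𝕜 := ℂ) _
  rw [h1, key, map_sum]
  refine Finset.sum_congr rfl fun i hi => ?_
  exact (norm_sq_eq_re_inner (𝕜 := ℂ) (f i)).symm

lemma my_hasSum_norm_sq {f : ℕ → H} {x : H}
    (ho : ∀ n m, n ≠ m → (inner ℂ (f n) (f m) : ℂ) = 0) (h : HasSum f x) :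
    HasSum (fun n => ‖f n‖ ^ 2) (‖x‖ ^ 2) := by
  have hc : Continuous fun y : H => ‖y‖ ^ 2 := (continuous_norm).pow 2
  have ht : Filter.Tendsto (fun s : Finset ℕ => ‖∑ i ∈ s, f i‖ ^ 2)
      Filter.atTop (nhds (‖x‖ ^ 2)) := (hc.tendsto x).comp h
  have heq : (fun s : Finset ℕ => ‖∑ i ∈ s, f i‖ ^ 2)
      = fun s : Finset ℕ => ∑ i ∈ s, ‖f i‖ ^ 2 := by
    funext s; exact my_norm_sum_sq f ho s
  rw [heq] at ht
  exact ht

end Helpers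

/-- Neumann-series invertibility of `1 - G` for an operator `G` raising the grading of a
Hilbert space `H = ⊕ₙ H⁽ⁿ⁾` (given by orthogonal projections `P n`) and satisfying
`‖Gψ‖ ≤ C (n+1)^{-1/4} ‖ψ‖` on `H⁽ⁿ⁾`: the inverse is `Σⱼ Gʲ` and its norm is at most
`Σⱼ Cʲ/(j!)^{1/4} < ∞`. -/
theorem neumann_inverse_of_graded_raising
    {H : Type*} [NormedAddCommGroup H] [InnerProductSpace ℂ H] [CompleteSpace H]
    (P : ℕ → (H →L[ℂ] H))
    (hProj : ∀ n, (P n).comp (P n) = P n)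
    (hSelfAdj : ∀ n, IsSelfAdjoint (P n))
    (hOrth : ∀ n m, n ≠ m → (P n).comp (P m) = 0)
    (hComplete : ∀ ψ : H, HasSum (fun n => P n ψ) ψ)
    (G : H →L[ℂ] H)
    (hGrade : ∀ n, G.comp (P n) = (P (n + 1)).comp (G.comp (P n)))
    (C : ℝ) (hC : 0 < C)
    (hGbound : ∀ n (ψ : H), ‖G (P n ψ)‖ ≤ C * ((n : ℝ) + 1) ^ (-(1 : ℝ) / 4) * ‖P n ψ‖) :
    Summable (fun j : ℕ => C ^ j / ((j.factorial : ℝ)) ^ ((1 : ℝ) / 4)) ∧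
    ∃ Ginv : H →L[ℂ] H,
      Ginv.comp (1 - G) = 1 ∧ (1 - G).comp Ginv = 1 ∧
      (∀ ψ : H, HasSum (fun j : ℕ => (G ^ j) ψ) (Ginv ψ)) ∧
      ‖Ginv‖ ≤ ∑' j : ℕ, C ^ j / ((j.factorial : ℝ)) ^ ((1 : ℝ) / 4) := by
  set a : ℕ → ℝ := fun j => C ^ j / ((j.factorial : ℝ)) ^ ((1 : ℝ) / 4) with ha
  have hfac_pos : ∀ j : ℕ, (0 : ℝ) < ((j.factorial : ℝ)) ^ ((1 : ℝ) / 4) := fun j =>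
    Real.rpow_pos_of_pos (by exact_mod_cast j.factorial_pos) _
  have ha_pos : ∀ j, 0 < a j := fun j => div_pos (pow_pos hC j) (hfac_pos j)
  -- symmetric projections
  have hsym : ∀ n (x y : H), (inner ℂ (P n x) y : ℂ) = inner ℂ x (P n y) := fun n x y =>
    (ContinuousLinearMap.isSelfAdjoint_iff_isSymmetric.mp (hSelfAdj n)) x y
  -- pointwise grading of powers
  have hgradepow : ∀ j n (ψ : H), (G ^ j) (P n ψ) = P (n + j) ((G ^ j) (P n ψ)) := by
    intro j
    induction j with
    | zero =>
      intro n ψ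
      simp only [pow_zero, ContinuousLinearMap.one_apply, Nat.add_zero]
      exact (congrFun (congrArg DFunLike.coe (hProj n)) ψ).symm
    | succ j ih =>
      intro n ψ
      have h1 : (G ^ (j + 1)) (P n ψ) = G ((G ^ j) (P n ψ)) := by
        rw [pow_succ']; rfl
      have h2 := congrFun (congrArg DFunLike.coe (hGrade (n + j))) ((G ^ j) (P n ψ))
      simp only [ContinuousLinearMap.comp_apply] at h2
      rw [h1, ih n ψ, h2, ← ih n ψ]
      exact (congrFun (congrArg DFunLike.coe (hProj (n + j + 1))) (G ((G ^ j) ((P n) ψ)))).symm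
  -- norm bound for powers on graded pieces
  have hpowbound : ∀ j n (ψ : H), ‖(G ^ j) (P n ψ)‖ ≤ a j * ‖P n ψ‖ := by
    intro j
    induction j with
    | zero =>
      intro n ψ
      simp only [pow_zero, ContinuousLinearMap.one_apply, ha, Nat.factorial_zero,
        Nat.cast_one, Real.one_rpow, pow_zero, div_one]
      simp
    | succ j ih =>
      intro n ψ
      have h1 : (G ^ (j + 1)) (P n ψ) = G ((G ^ j) (P n ψ)) := by
        rw [pow_succ']; rfl
      have h2 := hGbound (n + j) ((G ^ j) (P n ψ))
      rw [← hgradepow j n ψ] at h2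
      have h3 : ((n + j : ℕ) : ℝ) + 1 ≥ ((j : ℝ) + 1) := by
        push_cast; linarith [Nat.cast_nonneg (α := ℝ) n]
      have h4 : (((n + j : ℕ) : ℝ) + 1) ^ (-(1 : ℝ) / 4) ≤ ((j : ℝ) + 1) ^ (-(1 : ℝ) / 4) :=
        Real.rpow_le_rpow_of_nonpos (by positivity) h3 (by norm_num)
      have h5 : ‖(G ^ (j + 1)) (P n ψ)‖ ≤ C * ((j : ℝ) + 1) ^ (-(1 : ℝ) / 4) *
          ‖(G ^ j) (P n ψ)‖ := by
        rw [h1]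
        refine h2.trans ?_
        have := mul_le_mul_of_nonneg_right (mul_le_mul_of_nonneg_left h4 hC.le)
          (norm_nonneg ((G ^ j) (P n ψ)))
        exact this
      refine h5.trans ?_
      have h6 : C * ((j : ℝ) + 1) ^ (-(1 : ℝ) / 4) * ‖(G ^ j) (P n ψ)‖ ≤
          C * ((j : ℝ) + 1) ^ (-(1 : ℝ) / 4) * (a j * ‖P n ψ‖) :=
        mul_le_mul_of_nonneg_left (ih n ψ) (by positivity)
      refine h6.trans (le_of_eq ?_)
      have hfact : ((Nat.factorial (j + 1) : ℝ)) ^ ((1 : ℝ) / 4)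
          = ((j : ℝ) + 1) ^ ((1 : ℝ) / 4) * ((j.factorial : ℝ)) ^ ((1 : ℝ) / 4) := by
        rw [Nat.factorial_succ, Nat.cast_mul, Real.mul_rpow (by positivity) (by positivity)]
        push_cast; ring_nf
      have hneg : ((j : ℝ) + 1) ^ (-(1 : ℝ) / 4) = (((j : ℝ) + 1) ^ ((1 : ℝ) / 4))⁻¹ := by
        rw [← Real.rpow_neg (by positivity)]; norm_num
      simp only [ha, hfact, hneg, pow_succ]
      have hj1 : (0 : ℝ) < ((j : ℝ) + 1) ^ ((1 : ℝ) / 4) := by positivity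
      field_simp
  -- orthogonality of the images of the graded pieces under G^j
  have horthpow : ∀ (j : ℕ) (ψ : H) (n m : ℕ), n ≠ m →
      (inner ℂ ((G ^ j) (P n ψ)) ((G ^ j) (P m ψ)) : ℂ) = 0 := by
    intro j ψ n m hnm
    rw [hgradepow j n ψ, hgradepow j m ψ, hsym]
    have h0 : (P (n + j)).comp (P (m + j)) = 0 := hOrth _ _ (by omega)
    have := congrFun (congrArg DFunLike.coe h0) ((G ^ j) (P m ψ))
    simp only [ContinuousLinearMap.comp_apply, ContinuousLinearMap.zero_apply] at this
    rw [this, inner_zero_right]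
  -- operator norm bound for G^j
  have hopnorm : ∀ j : ℕ, ‖(G ^ j : H →L[ℂ] H)‖ ≤ a j := by
    intro j
    refine ContinuousLinearMap.opNorm_le_bound _ (ha_pos j).le fun ψ => ?_
    have horthP : ∀ n m : ℕ, n ≠ m → (inner ℂ (P n ψ) (P m ψ) : ℂ) = 0 := by
      intro n m hnm
      rw [hsym]
      have := congrFun (congrArg DFunLike.coe (hOrth n m hnm)) ψ
      simp only [ContinuousLinearMap.comp_apply, ContinuousLinearMap.zero_apply] at this
      rw [this, inner_zero_right]
    have hs1 : HasSum (fun n => ‖P n ψ‖ ^ 2) (‖ψ‖ ^ 2) :=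
      my_hasSum_norm_sq horthP (hComplete ψ)
    have hs2 : HasSum (fun n => (G ^ j) (P n ψ)) ((G ^ j) ψ) :=
      (G ^ j).hasSum (hComplete ψ)
    have hs3 : HasSum (fun n => ‖(G ^ j) (P n ψ)‖ ^ 2) (‖(G ^ j) ψ‖ ^ 2) :=
      my_hasSum_norm_sq (fun n m hnm => horthpow j ψ n m hnm) hs2
    have hle : ‖(G ^ j) ψ‖ ^ 2 ≤ (a j) ^ 2 * ‖ψ‖ ^ 2 := by
      have hs4 : HasSum (fun n => (a j) ^ 2 * ‖P n ψ‖ ^ 2) ((a j) ^ 2 * ‖ψ‖ ^ 2) :=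
        hs1.mul_left _
      refine hasSum_le (fun n => ?_) hs3 hs4
      have := hpowbound j n ψ
      calc ‖(G ^ j) (P n ψ)‖ ^ 2 ≤ (a j * ‖P n ψ‖) ^ 2 := by
            exact pow_le_pow_left₀ (norm_nonneg _) this 2
        _ = (a j) ^ 2 * ‖P n ψ‖ ^ 2 := by ring
    have h7 : ‖(G ^ j) ψ‖ ^ 2 ≤ (a j * ‖ψ‖) ^ 2 := by
      calc ‖(G ^ j) ψ‖ ^ 2 ≤ (a j) ^ 2 * ‖ψ‖ ^ 2 := hle
        _ = (a j * ‖ψ‖) ^ 2 := by ring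
    have := Real.sqrt_le_sqrt h7
    rwa [Real.sqrt_sq (norm_nonneg _), Real.sqrt_sq (by positivity)] at this
  -- summability of a
  have hsummable : Summable a := by
    refine summable_of_ratio_norm_eventually_le (r := 1 / 2) (by norm_num) ?_
    rw [Filter.eventually_atTop]
    refine ⟨⌈(2 * C) ^ 4⌉₊, fun j hj => ?_⟩
    have hj1 : ((2 * C) ^ 4 : ℝ) ≤ (j : ℝ) + 1 := by
      calc ((2 * C) ^ 4 : ℝ) ≤ (⌈(2 * C) ^ 4⌉₊ : ℝ) := Nat.le_ceil _
        _ ≤ (j : ℝ) := by exact_mod_cast hj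
        _ ≤ (j : ℝ) + 1 := by linarith
    have h2C : (2 * C : ℝ) ≤ ((j : ℝ) + 1) ^ ((1 : ℝ) / 4) := by
      have h1 : ((2 * C) ^ 4 : ℝ) ^ ((1 : ℝ) / 4) ≤ ((j : ℝ) + 1) ^ ((1 : ℝ) / 4) :=
        Real.rpow_le_rpow (by positivity) hj1 (by norm_num)
      rwa [← Real.rpow_natCast (2 * C) 4, ← Real.rpow_mul (by positivity),
        show ((4 : ℕ) : ℝ) * (1 / 4) = 1 by norm_num, Real.rpow_one] at h1
    have hq : (0 : ℝ) < ((j : ℝ) + 1) ^ ((1 : ℝ) / 4) := by positivity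
    have key : a (j + 1) ≤ 1 / 2 * a j := by
      have hfact : ((Nat.factorial (j + 1) : ℝ)) ^ ((1 : ℝ) / 4)
          = ((j : ℝ) + 1) ^ ((1 : ℝ) / 4) * ((j.factorial : ℝ)) ^ ((1 : ℝ) / 4) := by
        rw [Nat.factorial_succ, Nat.cast_mul, Real.mul_rpow (by positivity) (by positivity)]
        push_cast; ring_nf
      have : a (j + 1) = C / ((j : ℝ) + 1) ^ ((1 : ℝ) / 4) * a j := by
        simp only [ha, hfact, pow_succ]
        field_simp
      rw [this]
      have hCle : C / ((j : ℝ) + 1) ^ ((1 : ℝ) / 4) ≤ 1 / 2 := by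
        rw [div_le_div_iff₀ hq (by norm_num)]
        linarith
      exact mul_le_mul_of_nonneg_right hCle (ha_pos j).le
    have hnorm1 : ‖a (j + 1)‖ = a (j + 1) := Real.norm_of_nonneg (ha_pos _).le
    have hnorm2 : ‖a j‖ = a j := Real.norm_of_nonneg (ha_pos _).le
    rw [hnorm1, hnorm2]
    exact key
  refine ⟨hsummable, ?_⟩
  -- Neumann series
  have hnormsum : Summable (fun j => ‖(G ^ j : H →L[ℂ] H)‖) :=
    Summable.of_nonneg_of_le (fun j => norm_nonneg _) hopnorm hsummable
  have hsumG : Summable (fun j => (G ^ j : H →L[ℂ] H)) :=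
    Summable.of_norm hnormsum
  set S : H →L[ℂ] H := ∑' j, G ^ j with hSdef
  have hS : HasSum (fun j => (G ^ j : H →L[ℂ] H)) S := hsumG.hasSum
  have hGn_zero : Filter.Tendsto (fun n => (G ^ n : H →L[ℂ] H)) Filter.atTop (nhds 0) := by
    rw [tendsto_zero_iff_norm_tendsto_zero]
    exact squeeze_zero (fun n => norm_nonneg _) hopnorm hsummable.tendsto_atTop_zero
  have htel : ∀ (n : ℕ), ∑ j ∈ Finset.range n, ((G ^ j : H →L[ℂ] H) - G ^ (j + 1))
      = 1 - G ^ n := by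
    intro n
    rw [Finset.sum_range_sub' (fun j => (G ^ j : H →L[ℂ] H))]
    simp
  have hlim : Filter.Tendsto (fun n => (1 : H →L[ℂ] H) - G ^ n) Filter.atTop (nhds 1) := by
    have := hGn_zero.const_sub (1 : H →L[ℂ] H)
    simpa using this
  have htel_sum : HasSum (fun j => (G ^ j : H →L[ℂ] H) - G ^ (j + 1)) 1 := by
    have hsum' : Summable (fun j => (G ^ j : H →L[ℂ] H) - G ^ (j + 1)) :=
      hsumG.sub (hsumG.comp_injective (add_left_injective 1))
    have hhs := hsum'.hasSum
    have := hhs.tendsto_sum_nat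
    simp only [htel] at this
    have huniq : (∑' j, ((G ^ j : H →L[ℂ] H) - G ^ (j + 1))) = 1 :=
      tendsto_nhds_unique this hlim
    rwa [huniq] at hhs
  have hleft : S * (1 - G) = 1 := by
    have h1 : HasSum (fun j => (G ^ j : H →L[ℂ] H) * (1 - G)) (S * (1 - G)) :=
      hS.mul_right (1 - G)
    have h2 : (fun j => (G ^ j : H →L[ℂ] H) * (1 - G))
        = fun j => (G ^ j : H →L[ℂ] H) - G ^ (j + 1) := by
      funext j; rw [mul_sub, mul_one, pow_succ]
    rw [h2] at h1
    exact h1.unique htel_sum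
  have hright : (1 - G) * S = 1 := by
    have h1 : HasSum (fun j => ((1 : H →L[ℂ] H) - G) * G ^ j) ((1 - G) * S) :=
      hS.mul_left (1 - G)
    have h2 : (fun j => ((1 : H →L[ℂ] H) - G) * G ^ j)
        = fun j => (G ^ j : H →L[ℂ] H) - G ^ (j + 1) := by
      funext j; rw [sub_mul, one_mul, pow_succ']
    rw [h2] at h1
    exact h1.unique htel_sum
  refine ⟨S, ?_, ?_, ?_, ?_⟩
  · exact hleft
  · exact hright
  · intro ψ
    exact (ContinuousLinearMap.apply ℂ H ψ).hasSum hS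
  · calc ‖S‖ ≤ ∑' j, ‖(G ^ j : H →L[ℂ] H)‖ := norm_tsum_le_tsum_norm hnormsum
      _ ≤ ∑' j, a j := Summable.tsum_le_tsum hopnorm hnormsum hsummable
end

section
/- Under the hypotheses of the previous setting (G maps H⁽ⁿ⁾ to H⁽ⁿ⁺¹⁾ with ‖Gψ‖ ≤ C(n+1)^{-1/4}‖ψ‖ on H⁽ⁿ⁾, and additionally ‖n·(Gψ)‖ ≤ C n^{3/4}‖ψ‖ for ψ ∈ H⁽ⁿ⁻¹⁾), the operators 1-G and (1-G)^{-1} both map the domain of the number operator N (Nψ⁽ⁿ⁾ = n ψ⁽ⁿ⁾) into itself. -/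
open scoped BigOperators

lemma aux_ascFactorial_add (a p q : ℕ) :
    a.ascFactorial (p + q) = a.ascFactorial p * (a + p).ascFactorial q := by
  induction q with
  | zero => simp
  | succ q ih =>
    rw [← Nat.add_assoc, Nat.ascFactorial_succ, Nat.ascFactorial_succ, ih]
    ring

lemma aux_factorial_le_ascFactorial (a k : ℕ) : Nat.factorial k ≤ (a + 1).ascFactorial k := by
  induction k with
  | zero => simp
  | succ k ih =>
    rw [Nat.factorial_succ, Nat.ascFactorial_succ]
    exact Nat.mul_le_mul (by omega) ih

lemma aux_ascFactorial_four (b : ℕ) :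
    Nat.ascFactorial b 4 = (b + 3) * ((b + 2) * ((b + 1) * (b * 1))) := rfl

set_option maxHeartbeats 1000000 in
/-- Invariance of the domain of the number operator: in the graded setting of the Neumann-series
lemma, if moreover `‖n · G ψ‖ ≤ C n^{3/4} ‖ψ‖` for `ψ ∈ H⁽ⁿ⁻¹⁾`, then both `1 - G` and
`(1-G)⁻¹ = Σⱼ Gʲ` map the domain `D(N) = {ψ : Σ n² ‖P n ψ‖² < ∞}` of the number operator
into itself. -/
theorem one_sub_G_and_inverse_preserve_number_domain
    {H : Type*} [NormedAddCommGroup H] [InnerProductSpace ℂ H] [CompleteSpace H]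
    (P : ℕ → (H →L[ℂ] H))
    (hProj : ∀ n, (P n).comp (P n) = P n)
    (hSelfAdj : ∀ n, IsSelfAdjoint (P n))
    (hOrth : ∀ n m, n ≠ m → (P n).comp (P m) = 0)
    (hComplete : ∀ ψ : H, HasSum (fun n => P n ψ) ψ)
    (G : H →L[ℂ] H)
    (hGrade : ∀ n, G.comp (P n) = (P (n + 1)).comp (G.comp (P n)))
    (C : ℝ) (hC : 0 < C)
    (hGbound : ∀ n (ψ : H), ‖G (P n ψ)‖ ≤ C * ((n : ℝ) + 1) ^ (-(1 : ℝ) / 4) * ‖P n ψ‖)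
    (hGnum : ∀ n : ℕ, 1 ≤ n → ∀ ψ : H,
      ‖(n : ℝ) • G (P (n - 1) ψ)‖ ≤ C * (n : ℝ) ^ ((3 : ℝ) / 4) * ‖P (n - 1) ψ‖)
    (Ginv : H →L[ℂ] H)
    (hGinv₁ : Ginv.comp (1 - G) = 1) (hGinv₂ : (1 - G).comp Ginv = 1)
    (hGinvSum : ∀ ψ : H, HasSum (fun j : ℕ => (G ^ j) ψ) (Ginv ψ)) :
    ∀ ψ : H, Summable (fun n : ℕ => ((n : ℝ) ^ 2) * ‖P n ψ‖ ^ 2) →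
      (Summable (fun n : ℕ => ((n : ℝ) ^ 2) * ‖P n ((1 - G) ψ)‖ ^ 2) ∧
       Summable (fun n : ℕ => ((n : ℝ) ^ 2) * ‖P n (Ginv ψ)‖ ^ 2)) := by
  intro ψ hψ
  -- basic projection identities
  have hPP : ∀ n (x : H), P n (P n x) = P n x := fun n x => DFunLike.congr_fun (hProj n) x
  have hPQ : ∀ n m (x : H), n ≠ m → P n (P m x) = 0 := fun n m x h => by
    simpa using DFunLike.congr_fun (hOrth n m h) x
  -- grading of powers of G
  have hPow : ∀ j m (x : H), (G ^ j) (P m x) = P (m + j) ((G ^ j) (P m x)) := by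
    intro j
    induction j with
    | zero => intro m x; simpa using (hPP m x).symm
    | succ j ih =>
      intro m x
      have h1 : (G ^ (j + 1)) (P m x) = G ((G ^ j) (P m x)) := by
        rw [pow_succ', ContinuousLinearMap.mul_apply]
      have hz : P (m + j) ((G ^ j) (P m x)) = (G ^ j) (P m x) := (ih m x).symm
      have hg := DFunLike.congr_fun (hGrade (m + j)) ((G ^ j) (P m x))
      simp only [ContinuousLinearMap.comp_apply] at hg
      calc (G ^ (j + 1)) (P m x) = G ((G ^ j) (P m x)) := h1
        _ = G (P (m + j) ((G ^ j) (P m x))) := by rw [hz]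
        _ = P (m + j + 1) (G (P (m + j) ((G ^ j) (P m x)))) := hg
        _ = P (m + (j + 1)) ((G ^ (j + 1)) (P m x)) := by rw [hz, ← h1]; rfl
  -- projection of G^j x
  have hPG : ∀ j n (x : H),
      (j ≤ n → P n ((G ^ j) x) = (G ^ j) (P (n - j) x)) ∧
      (n < j → P n ((G ^ j) x) = 0) := by
    intro j n x
    have hs : HasSum (fun m => P n ((G ^ j) (P m x))) (P n ((G ^ j) x)) :=
      (P n).hasSum ((G ^ j).hasSum (hComplete x))
    have hzero : ∀ m, m + j ≠ n → P n ((G ^ j) (P m x)) = 0 := by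
      intro m hm
      rw [hPow j m x, hPQ n (m + j) _ (fun h => hm h.symm)]
    constructor
    · intro hj
      have h1 : HasSum (fun m => P n ((G ^ j) (P m x)))
          (P n ((G ^ j) (P (n - j) x))) :=
        hasSum_single (n - j) (fun m hm => hzero m (by omega))
      have hy : P n ((G ^ j) (P (n - j) x)) = (G ^ j) (P (n - j) x) := by
        have h2 := hPow j (n - j) x
        rw [show n - j + j = n from by omega] at h2
        exact h2.symm
      rw [hs.unique h1, hy]
    · intro hj
      have h0 : HasSum (fun m => P n ((G ^ j) (P m x))) 0 := by
        convert hasSum_zero with m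
        exact hzero m (by omega)
      exact hs.unique h0
  -- iterated norm bound
  have hNorm : ∀ j m (x : H), ‖(G ^ j) (P m x)‖ ≤
      C ^ j * ((Nat.ascFactorial (m + 1) j : ℝ)) ^ (-(1 : ℝ) / 4) * ‖P m x‖ := by
    intro j
    induction j with
    | zero => intro m x; simp
    | succ j ih =>
      intro m x
      have h1 : (G ^ (j + 1)) (P m x) = G ((G ^ j) (P m x)) := by
        rw [pow_succ', ContinuousLinearMap.mul_apply]
      have hasc : (0:ℝ) ≤ ((Nat.ascFactorial (m + 1) j : ℝ)) ^ (-(1 : ℝ) / 4) := by positivity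
      calc ‖(G ^ (j + 1)) (P m x)‖
          = ‖G (P (m + j) ((G ^ j) (P m x)))‖ := by rw [h1]; rw [← hPow]
        _ ≤ C * (((m + j : ℕ) : ℝ) + 1) ^ (-(1 : ℝ) / 4) * ‖P (m + j) ((G ^ j) (P m x))‖ :=
            hGbound (m + j) _
        _ = C * (((m + j : ℕ) : ℝ) + 1) ^ (-(1 : ℝ) / 4) * ‖(G ^ j) (P m x)‖ := by rw [← hPow]
        _ ≤ C * (((m + j : ℕ) : ℝ) + 1) ^ (-(1 : ℝ) / 4) *
              (C ^ j * ((Nat.ascFactorial (m + 1) j : ℝ)) ^ (-(1 : ℝ) / 4) * ‖P m x‖) := by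
            have hpos : (0:ℝ) ≤ C * (((m + j : ℕ) : ℝ) + 1) ^ (-(1 : ℝ) / 4) := by positivity
            exact mul_le_mul_of_nonneg_left (ih m x) hpos
        _ = C ^ (j + 1) * ((Nat.ascFactorial (m + 1) (j + 1) : ℝ)) ^ (-(1 : ℝ) / 4) * ‖P m x‖ := by
            rw [Nat.ascFactorial_succ]
            push_cast
            rw [Real.mul_rpow (by positivity) (by positivity)]
            have : ((m : ℝ) + 1 + j) = ((m : ℝ) + j + 1) := by ring
            rw [this]
            ring
  -- the sequences
  set c : ℕ → ℝ := fun m => ((m : ℝ) + 1) * ‖P m ψ‖ with hc_def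
  set a : ℕ → ℝ := fun j =>
    4 * C ^ j * ((Nat.factorial (j - 4) : ℝ)) ^ (-(1 : ℝ) / 4) with ha_def
  have hc_nonneg : ∀ m, 0 ≤ c m := fun m => by
    simp only [hc_def]; positivity
  have ha_nonneg : ∀ j, 0 ≤ a j := fun j => by
    simp only [ha_def]; positivity
  -- summability of c^2
  have hsq : Summable (fun m => ‖P m ψ‖ ^ 2) := by
    have h1 : Summable (fun m => (((m + 1 : ℕ)) : ℝ) ^ 2 * ‖P (m + 1) ψ‖ ^ 2) :=
      (summable_nat_add_iff (f := fun n : ℕ => ((n : ℝ) ^ 2) * ‖P n ψ‖ ^ 2) 1).mpr hψ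
    have h2 : Summable (fun m => ‖P (m + 1) ψ‖ ^ 2) := by
      refine Summable.of_nonneg_of_le (fun m => by positivity) (fun m => ?_) h1
      have h3 : (1 : ℝ) ≤ (((m + 1 : ℕ)) : ℝ) ^ 2 := by
        have : (1:ℝ) ≤ (((m + 1 : ℕ)) : ℝ) := by exact_mod_cast Nat.one_le_iff_ne_zero.mpr (by omega)
        nlinarith
      nlinarith [sq_nonneg ‖P (m + 1) ψ‖]
    exact (summable_nat_add_iff 1).mp h2
  have hc2 : Summable (fun m => c m ^ 2) := by
    refine Summable.of_nonneg_of_le (fun m => by positivity) (fun m => ?_)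
      ((hψ.mul_left 2).add (hsq.mul_left 2))
    simp only [hc_def]
    nlinarith [mul_nonneg (sq_nonneg ((m : ℝ) - 1)) (sq_nonneg ‖P m ψ‖)]
  -- summability of a
  have ha : Summable a := by
    refine summable_of_ratio_norm_eventually_le (r := 1/2) (by norm_num) ?_
    rw [Filter.eventually_atTop]
    refine ⟨4 + Nat.ceil ((2 * C) ^ 4), fun j hj => ?_⟩
    have hj4 : 4 ≤ j := by omega
    have hjc : ((2 * C) ^ 4 : ℝ) ≤ ((j - 4 + 1 : ℕ) : ℝ) := by
      have h1 : Nat.ceil ((2 * C) ^ 4) ≤ j - 4 + 1 := by omega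
      calc ((2 * C) ^ 4 : ℝ) ≤ (Nat.ceil ((2 * C) ^ 4) : ℝ) := Nat.le_ceil _
        _ ≤ ((j - 4 + 1 : ℕ) : ℝ) := by exact_mod_cast h1
    have hfs : Nat.factorial (j + 1 - 4) = (j - 4 + 1) * Nat.factorial (j - 4) := by
      rw [show j + 1 - 4 = (j - 4) + 1 from by omega, Nat.factorial_succ]
    have hkey : C * ((j - 4 + 1 : ℕ) : ℝ) ^ (-(1 : ℝ) / 4) ≤ 1 / 2 := by
      have hx : (0:ℝ) < ((j - 4 + 1 : ℕ) : ℝ) := by positivity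
      have h2C : (0:ℝ) < 2 * C := by linarith
      have h4 : (2 * C : ℝ) ≤ ((j - 4 + 1 : ℕ) : ℝ) ^ ((1 : ℝ) / 4) := by
        have := Real.rpow_le_rpow (by positivity) hjc (by norm_num : (0:ℝ) ≤ (1:ℝ)/4)
        calc (2 * C : ℝ) = ((2 * C) ^ (4:ℕ)) ^ ((1:ℝ)/4) := by
              rw [← Real.rpow_natCast (2 * C) 4, ← Real.rpow_mul h2C.le]
              norm_num
          _ ≤ ((j - 4 + 1 : ℕ) : ℝ) ^ ((1 : ℝ) / 4) := this
      have h5 : ((j - 4 + 1 : ℕ) : ℝ) ^ (-(1 : ℝ) / 4)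
          = (((j - 4 + 1 : ℕ) : ℝ) ^ ((1 : ℝ) / 4))⁻¹ := by
        rw [neg_div, Real.rpow_neg hx.le]
      rw [h5]
      have h6 : (0:ℝ) < ((j - 4 + 1 : ℕ) : ℝ) ^ ((1 : ℝ) / 4) := by positivity
      calc C * (((j - 4 + 1 : ℕ) : ℝ) ^ ((1 : ℝ) / 4))⁻¹
          ≤ C * (2 * C)⁻¹ := mul_le_mul_of_nonneg_left (inv_anti₀ h2C h4) hC.le
        _ = 1 / 2 := by field_simp
    have hfpos : (0:ℝ) < (Nat.factorial (j - 4) : ℝ) := by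
      exact_mod_cast Nat.factorial_pos _
    have haj1 : a (j + 1) = C * ((j - 4 + 1 : ℕ) : ℝ) ^ (-(1 : ℝ) / 4) *
        (4 * C ^ j * ((Nat.factorial (j - 4) : ℝ)) ^ (-(1 : ℝ) / 4)) := by
      simp only [ha_def]
      rw [hfs]
      push_cast
      rw [Real.mul_rpow (by positivity) hfpos.le]
      ring
    have haj_nonneg := ha_nonneg j
    rw [Real.norm_eq_abs, Real.norm_eq_abs, abs_of_nonneg (ha_nonneg _), abs_of_nonneg (ha_nonneg _)]
    rw [haj1]
    have h7 : (0:ℝ) ≤ 4 * C ^ j * ((Nat.factorial (j - 4) : ℝ)) ^ (-(1 : ℝ) / 4) := by positivity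
    calc C * ((j - 4 + 1 : ℕ) : ℝ) ^ (-(1 : ℝ) / 4) *
          (4 * C ^ j * ((Nat.factorial (j - 4) : ℝ)) ^ (-(1 : ℝ) / 4))
        ≤ (1/2) * (4 * C ^ j * ((Nat.factorial (j - 4) : ℝ)) ^ (-(1 : ℝ) / 4)) :=
          mul_le_mul_of_nonneg_right hkey h7
      _ = (1/2) * a j := by simp only [ha_def]
  -- key termwise bound
  have hterm : ∀ n j : ℕ, j ≤ n → (n : ℝ) * ‖(G ^ j) (P (n - j) ψ)‖ ≤ a j * c (n - j) := by
    intro n j hj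
    set m := n - j with hm_def
    have hmn : n = m + j := by omega
    have hnorm := hNorm j m ψ
    have hnn : (0:ℝ) ≤ (n : ℝ) := Nat.cast_nonneg n
    by_cases hj4 : j ≤ 3
    · -- small j
      have hfact : Nat.factorial (j - 4) = 1 := by
        have : j - 4 = 0 := by omega
        rw [this]; rfl
      have haval : a j = 4 * C ^ j := by
        simp only [ha_def, hfact]
        norm_num
      have hasc1 : ((Nat.ascFactorial (m + 1) j : ℝ)) ^ (-(1 : ℝ) / 4) ≤ 1 := by
        apply Real.rpow_le_one_of_one_le_of_nonpos
        · exact_mod_cast Nat.one_le_iff_ne_zero.mpr (Nat.ascFactorial_pos m j).ne'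
        · norm_num
      have h8 : ‖(G ^ j) (P m ψ)‖ ≤ C ^ j * ‖P m ψ‖ := by
        calc ‖(G ^ j) (P m ψ)‖ ≤ C ^ j * ((Nat.ascFactorial (m + 1) j : ℝ)) ^ (-(1 : ℝ) / 4) * ‖P m ψ‖ := hnorm
          _ ≤ C ^ j * 1 * ‖P m ψ‖ := by
              apply mul_le_mul_of_nonneg_right _ (norm_nonneg _)
              exact mul_le_mul_of_nonneg_left hasc1 (by positivity)
          _ = C ^ j * ‖P m ψ‖ := by ring
      have h9 : (n:ℝ) ≤ 4 * ((m:ℝ) + 1) := by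
        have : (n:ℝ) = (m:ℝ) + (j:ℝ) := by exact_mod_cast congrArg (Nat.cast : ℕ → ℝ) hmn
        have hj3 : (j:ℝ) ≤ 3 := by exact_mod_cast hj4
        have : (0:ℝ) ≤ (m:ℝ) := Nat.cast_nonneg m
        linarith [show (n:ℝ) = (m:ℝ) + (j:ℝ) from by exact_mod_cast congrArg (Nat.cast : ℕ → ℝ) hmn]
      calc (n : ℝ) * ‖(G ^ j) (P m ψ)‖ ≤ (n : ℝ) * (C ^ j * ‖P m ψ‖) :=
            mul_le_mul_of_nonneg_left h8 hnn
        _ ≤ (4 * ((m:ℝ) + 1)) * (C ^ j * ‖P m ψ‖) := by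
            apply mul_le_mul_of_nonneg_right h9 (by positivity)
        _ = a j * c m := by rw [haval]; simp only [hc_def]; ring
    · -- j ≥ 4
      have hj4' : 4 ≤ j := by omega
      have hn4 : (4:ℝ) ≤ (n:ℝ) := by exact_mod_cast le_trans hj4' hj
      have hnpos : (0:ℝ) < (n:ℝ) := by linarith
      -- ascFactorial splitting
      have hsplit : Nat.ascFactorial (m + 1) j =
          Nat.ascFactorial (m + 1) (j - 4) * Nat.ascFactorial (m + 1 + (j - 4)) 4 := by
        conv_lhs => rw [show j = (j - 4) + 4 from by omega]
        exact aux_ascFactorial_add (m + 1) (j - 4) 4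
      have hge : ((Nat.factorial (j - 4) : ℝ)) * ((n:ℝ)/4) ^ 4 ≤
          (Nat.ascFactorial (m + 1) j : ℝ) := by
        rw [hsplit]
        push_cast
        have h1 : (Nat.factorial (j - 4) : ℝ) ≤ (Nat.ascFactorial (m + 1) (j - 4) : ℝ) := by
          exact_mod_cast aux_factorial_le_ascFactorial m (j - 4)
        have hb : m + 1 + (j - 4) + 3 = n := by omega
        have h2 : ((n:ℝ)/4) ^ 4 ≤ (Nat.ascFactorial (m + 1 + (j - 4)) 4 : ℝ) := by
          have hb3 : ((m + 1 + (j - 4) + 3 : ℕ) : ℝ) = (n:ℝ) := by exact_mod_cast congrArg (Nat.cast : ℕ → ℝ) hb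
          rw [aux_ascFactorial_four]
          push_cast at hb3 ⊢
          set y := (m:ℝ) + 1 + ((j - 4 : ℕ) : ℝ) with hy
          have hy3 : y = (n:ℝ) - 3 := by linarith
          rw [hy3]
          have e1 : (n:ℝ)/4 ≤ (n:ℝ) - 3 := by linarith
          have e2 : (n:ℝ)/4 ≤ (n:ℝ) - 2 := by linarith
          have e3 : (n:ℝ)/4 ≤ (n:ℝ) - 1 := by linarith
          have e4 : (n:ℝ)/4 ≤ (n:ℝ) - 3 + 3 := by linarith
          have hq : (0:ℝ) ≤ (n:ℝ)/4 := by positivity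
          calc ((n:ℝ)/4) ^ 4 = ((n:ℝ)/4) * (((n:ℝ)/4) * (((n:ℝ)/4) * (((n:ℝ)/4) * 1))) := by ring
            _ ≤ ((n:ℝ) - 3 + 3) * (((n:ℝ) - 3 + 2) * (((n:ℝ) - 3 + 1) * (((n:ℝ) - 3) * 1))) := by
                apply mul_le_mul (by linarith) _ (by positivity) (by linarith)
                apply mul_le_mul (by linarith) _ (by positivity) (by linarith)
                apply mul_le_mul (by linarith) _ (by positivity) (by linarith)
                apply mul_le_mul (by linarith) (le_refl _) (by norm_num) (by linarith)
        calc (Nat.factorial (j - 4) : ℝ) * ((n:ℝ)/4) ^ 4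
            ≤ (Nat.ascFactorial (m + 1) (j - 4) : ℝ) * (Nat.ascFactorial (m + 1 + (j - 4)) 4 : ℝ) := by
              apply mul_le_mul h1 h2 (by positivity) (by positivity)
          _ = _ := by push_cast; ring
      have hfpos : (0:ℝ) < (Nat.factorial (j - 4) : ℝ) := by exact_mod_cast Nat.factorial_pos _
      have hbase : (0:ℝ) < ((Nat.factorial (j - 4) : ℝ)) * ((n:ℝ)/4) ^ 4 := by positivity
      have h2 : ((Nat.ascFactorial (m + 1) j : ℝ)) ^ (-(1 : ℝ) / 4) ≤
          (((Nat.factorial (j - 4) : ℝ)) * ((n:ℝ)/4) ^ 4) ^ (-(1 : ℝ) / 4) :=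
        Real.rpow_le_rpow_of_nonpos hbase hge (by norm_num)
      have h3 : (((Nat.factorial (j - 4) : ℝ)) * ((n:ℝ)/4) ^ 4) ^ (-(1 : ℝ) / 4) =
          ((Nat.factorial (j - 4) : ℝ)) ^ (-(1 : ℝ) / 4) * (4 / (n:ℝ)) := by
        rw [Real.mul_rpow hfpos.le (by positivity)]
        congr 1
        rw [← Real.rpow_natCast ((n:ℝ)/4) 4, ← Real.rpow_mul (by positivity)]
        norm_num
        rw [Real.rpow_neg_one, inv_div]
      have hkey : (n:ℝ) * ((Nat.ascFactorial (m + 1) j : ℝ)) ^ (-(1 : ℝ) / 4) ≤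
          4 * ((Nat.factorial (j - 4) : ℝ)) ^ (-(1 : ℝ) / 4) := by
        calc (n:ℝ) * ((Nat.ascFactorial (m + 1) j : ℝ)) ^ (-(1 : ℝ) / 4)
            ≤ (n:ℝ) * (((Nat.factorial (j - 4) : ℝ)) ^ (-(1 : ℝ) / 4) * (4 / (n:ℝ))) := by
              rw [← h3]; exact mul_le_mul_of_nonneg_left h2 hnpos.le
          _ = 4 * ((Nat.factorial (j - 4) : ℝ)) ^ (-(1 : ℝ) / 4) := by
              field_simp
      have hm1 : (1:ℝ) ≤ (m:ℝ) + 1 := by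
        have : (0:ℝ) ≤ (m:ℝ) := Nat.cast_nonneg m
        linarith
      calc (n : ℝ) * ‖(G ^ j) (P m ψ)‖
          ≤ (n:ℝ) * (C ^ j * ((Nat.ascFactorial (m + 1) j : ℝ)) ^ (-(1 : ℝ) / 4) * ‖P m ψ‖) :=
            mul_le_mul_of_nonneg_left hnorm hnn
        _ = ((n:ℝ) * ((Nat.ascFactorial (m + 1) j : ℝ)) ^ (-(1 : ℝ) / 4)) * (C ^ j * ‖P m ψ‖) := by
            ring
        _ ≤ (4 * ((Nat.factorial (j - 4) : ℝ)) ^ (-(1 : ℝ) / 4)) * (C ^ j * ‖P m ψ‖) :=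
            mul_le_mul_of_nonneg_right hkey (by positivity)
        _ ≤ (4 * ((Nat.factorial (j - 4) : ℝ)) ^ (-(1 : ℝ) / 4)) * (C ^ j * (((m:ℝ) + 1) * ‖P m ψ‖)) := by
            apply mul_le_mul_of_nonneg_left _ (by positivity)
            apply mul_le_mul_of_nonneg_left _ (by positivity)
            nlinarith [norm_nonneg (P m ψ)]
        _ = a j * c m := by simp only [ha_def, hc_def]; ring
  constructor
  · -- (1 - G) part
    have hP0 : ∀ n : ℕ, 1 ≤ n → P n (G ψ) = G (P (n - 1) ψ) := by
      intro n hn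
      have := (hPG 1 n ψ).1 hn
      simpa [pow_one] using this
    have hshift : Summable (fun n => c (n - 1) ^ 2) := by
      apply (summable_nat_add_iff 1).mp
      simpa using hc2
    have hgsum : Summable (fun n : ℕ => 2 * ((n : ℝ) ^ 2 * ‖P n ψ‖ ^ 2) + 2 * (C ^ 2 * c (n - 1) ^ 2)) :=
      ((hψ.mul_left 2)).add (((hshift.mul_left (C ^ 2))).mul_left 2)
    refine Summable.of_nonneg_of_le (fun n => by positivity) (fun n => ?_) hgsum
    rcases Nat.eq_zero_or_pos n with h0 | hn
    · subst h0
      simp only [Nat.cast_zero]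
      have : (0:ℝ) ≤ 2 * ((0 : ℝ) ^ 2 * ‖P 0 ψ‖ ^ 2) + 2 * (C ^ 2 * c (0 - 1) ^ 2) := by positivity
      simpa using this
    · obtain ⟨k, rfl⟩ : ∃ k, n = k + 1 := ⟨n - 1, by omega⟩
      have hsub : P (k + 1) ((1 - G) ψ) = P (k + 1) ψ - G (P k ψ) := by
        have h1 : (1 - G) ψ = ψ - G ψ := by
          simp [ContinuousLinearMap.sub_apply]
        rw [h1, map_sub, hP0 (k + 1) (by omega)]
        simp
      have hGb : ‖G (P k ψ)‖ ≤ C * ‖P k ψ‖ := by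
        have h1 := hGbound k ψ
        have h2 : ((k : ℝ) + 1) ^ (-(1 : ℝ) / 4) ≤ 1 := by
          apply Real.rpow_le_one_of_one_le_of_nonpos
          · have : (0:ℝ) ≤ (k:ℝ) := Nat.cast_nonneg k
            linarith
          · norm_num
        calc ‖G (P k ψ)‖ ≤ C * ((k : ℝ) + 1) ^ (-(1 : ℝ) / 4) * ‖P k ψ‖ := h1
          _ ≤ C * 1 * ‖P k ψ‖ := by
              apply mul_le_mul_of_nonneg_right _ (norm_nonneg _)
              exact mul_le_mul_of_nonneg_left h2 hC.le
          _ = C * ‖P k ψ‖ := by ring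
      have hck : c ((k + 1) - 1) = ((k:ℝ) + 1) * ‖P k ψ‖ := by
        simp only [hc_def, Nat.add_sub_cancel]
      have htri : ‖P (k + 1) ((1 - G) ψ)‖ ≤ ‖P (k + 1) ψ‖ + C * ‖P k ψ‖ := by
        rw [hsub]
        calc ‖P (k + 1) ψ - G (P k ψ)‖ ≤ ‖P (k + 1) ψ‖ + ‖G (P k ψ)‖ := norm_sub_le _ _
          _ ≤ ‖P (k + 1) ψ‖ + C * ‖P k ψ‖ := by linarith
      have hnn : (0:ℝ) ≤ ((k + 1 : ℕ) : ℝ) := Nat.cast_nonneg _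
      have hmul : ((k + 1 : ℕ) : ℝ) * ‖P (k + 1) ((1 - G) ψ)‖ ≤
          ((k + 1 : ℕ) : ℝ) * ‖P (k + 1) ψ‖ + C * c ((k + 1) - 1) := by
        rw [hck]
        push_cast
        calc ((k:ℝ) + 1) * ‖P (k + 1) ((1 - G) ψ)‖
            ≤ ((k:ℝ) + 1) * (‖P (k + 1) ψ‖ + C * ‖P k ψ‖) := by
              apply mul_le_mul_of_nonneg_left _ (by positivity)
              exact_mod_cast htri
          _ = ((k:ℝ) + 1) * ‖P (k + 1) ψ‖ + C * (((k:ℝ) + 1) * ‖P k ψ‖) := by ring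
      have hLnn : (0:ℝ) ≤ ((k + 1 : ℕ) : ℝ) * ‖P (k + 1) ((1 - G) ψ)‖ := by positivity
      have h2 := pow_le_pow_left₀ hLnn hmul 2
      push_cast at h2 ⊢
      nlinarith [sq_nonneg (((k:ℝ) + 1) * ‖P (k + 1) ψ‖ - C * c k), h2]
  · -- Ginv part
    have hdecomp : ∀ n, P n (Ginv ψ) = ∑ j ∈ Finset.range (n + 1), (G ^ j) (P (n - j) ψ) := by
      intro n
      have hs : HasSum (fun j => P n ((G ^ j) ψ)) (P n (Ginv ψ)) := (P n).hasSum (hGinvSum ψ)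
      have h1 : HasSum (fun j => P n ((G ^ j) ψ))
          (∑ j ∈ Finset.range (n + 1), P n ((G ^ j) ψ)) :=
        hasSum_sum_of_ne_finset_zero (fun j hj =>
          (hPG j n ψ).2 (by simp only [Finset.mem_range] at hj; omega))
      rw [hs.unique h1]
      refine Finset.sum_congr rfl fun j hj => ?_
      exact (hPG j n ψ).1 (by simp only [Finset.mem_range] at hj; omega)
    set A := ∑' j, a j with hA_def
    set T : ℕ → ℝ := fun n => ∑ j ∈ Finset.range (n + 1), a j * c (n - j) ^ 2 with hT_def
    have hT_nonneg : ∀ n, 0 ≤ T n := fun n =>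
      Finset.sum_nonneg fun j _ => mul_nonneg (ha_nonneg j) (sq_nonneg _)
    have hT : Summable T := by
      have ha' : Summable (fun j => ‖a j‖) := by
        simpa only [Real.norm_eq_abs] using ha.abs
      have hg' : Summable (fun m => ‖c m ^ 2‖) := by
        simpa only [Real.norm_eq_abs] using hc2.abs
      have h := summable_norm_sum_mul_antidiagonal_of_summable_norm ha' hg'
      refine h.congr fun n => ?_
      rw [Real.norm_eq_abs, abs_of_nonneg]
      · rw [Finset.Nat.sum_antidiagonal_eq_sum_range_succ_mk]
      · exact Finset.sum_nonneg fun kl _ => mul_nonneg (ha_nonneg _) (sq_nonneg _)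
    refine Summable.of_nonneg_of_le (fun n => by positivity) (fun n => ?_) (hT.mul_left A)
    have hS : (n : ℝ) * ‖P n (Ginv ψ)‖ ≤ ∑ j ∈ Finset.range (n + 1), a j * c (n - j) := by
      rw [hdecomp n]
      calc (n : ℝ) * ‖∑ j ∈ Finset.range (n + 1), (G ^ j) (P (n - j) ψ)‖
          ≤ (n : ℝ) * ∑ j ∈ Finset.range (n + 1), ‖(G ^ j) (P (n - j) ψ)‖ := by
            apply mul_le_mul_of_nonneg_left (norm_sum_le _ _) (Nat.cast_nonneg n)
        _ = ∑ j ∈ Finset.range (n + 1), (n : ℝ) * ‖(G ^ j) (P (n - j) ψ)‖ := Finset.mul_sum _ _ _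
        _ ≤ ∑ j ∈ Finset.range (n + 1), a j * c (n - j) :=
            Finset.sum_le_sum fun j hj =>
              hterm n j (by simp only [Finset.mem_range] at hj; omega)
    have hCS : (∑ j ∈ Finset.range (n + 1), a j * c (n - j)) ^ 2 ≤
        (∑ j ∈ Finset.range (n + 1), a j) * T n := by
      simp only [hT_def]
      exact Finset.sum_sq_le_sum_mul_sum_of_sq_eq_mul _ (fun i _ => ha_nonneg i)
        (fun i _ => mul_nonneg (ha_nonneg i) (sq_nonneg _)) (fun i _ => by ring)
    have hAle : (∑ j ∈ Finset.range (n + 1), a j) ≤ A :=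
      Summable.sum_le_tsum _ (fun j _ => ha_nonneg j) ha
    have hSnn : (0:ℝ) ≤ (n : ℝ) * ‖P n (Ginv ψ)‖ := by positivity
    calc (n : ℝ) ^ 2 * ‖P n (Ginv ψ)‖ ^ 2 = ((n : ℝ) * ‖P n (Ginv ψ)‖) ^ 2 := by ring
      _ ≤ (∑ j ∈ Finset.range (n + 1), a j * c (n - j)) ^ 2 := pow_le_pow_left₀ hSnn hS 2
      _ ≤ (∑ j ∈ Finset.range (n + 1), a j) * T n := hCS
      _ ≤ A * T n := mul_le_mul_of_nonneg_right hAle (hT_nonneg n)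
end

section
/- There exists a constant C such that for all n ≥ 1 and all K = (k₁,…,k_n) ∈ ℝ^{3n}, Σ_{i=1}^n (1 + k_i²) ∫_{ℝ³} (n + 1 + K² + ξ²)^{-3/2+ε} (1+ξ²)^{-1-ε} dξ ≤ C, uniformly in K, for any fixed 0 < ε < 1/2, where K² = Σ_j |k_j|². -/
open MeasureTheory Real Set

/-- 1-D integrable cutoff of `|x| ^ (-a)` for `0 < a < 1`. -/
lemma schur_g0_integrable {a : ℝ} (ha0 : 0 < a) (ha1 : a < 1) :
    Integrable (fun x : ℝ =>
      (Ioc (0:ℝ) 1).indicator (fun y => y ^ (-a)) x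
        + (Ico (-1:ℝ) 0).indicator (fun y => (-y) ^ (-a)) x) := by
  have h1 : Integrable ((Ioc (0:ℝ) 1).indicator (fun y => y ^ (-a))) := by
    rw [integrable_indicator_iff measurableSet_Ioc]
    exact (intervalIntegrable_iff_integrableOn_Ioc_of_le zero_le_one).mp
      (intervalIntegral.intervalIntegrable_rpow' (by linarith))
  have h2 : Integrable ((Ico (-1:ℝ) 0).indicator (fun y => (-y) ^ (-a))) := by
    have h2' := h1.comp_neg
    have heq : (fun x : ℝ => (Ioc (0:ℝ) 1).indicator (fun y => y ^ (-a)) (-x))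
        = (Ico (-1:ℝ) 0).indicator (fun y => (-y) ^ (-a)) := by
      funext x
      by_cases hx : x ∈ Ico (-1:ℝ) 0
      · have hx' : -x ∈ Ioc (0:ℝ) 1 := by
          rcases hx with ⟨h1', h2''⟩
          constructor <;> [linarith; linarith]
        rw [indicator_of_mem hx' , indicator_of_mem hx]
      · have hx' : -x ∉ Ioc (0:ℝ) 1 := by
          simp only [mem_Ico, not_and, not_lt] at hx
          simp only [mem_Ioc, not_and, not_le]
          intro h0
          by_cases hx1 : (-1:ℝ) ≤ x
          · exact absurd (hx hx1) (by linarith)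
          · linarith
        rw [indicator_of_notMem hx', indicator_of_notMem hx]
    rwa [heq] at h2'
  exact h1.add h2

/-- Integrability of the model function `(1+‖η‖²)^(-3/2+ε) ‖η‖^{-2-2ε}` on `ℝ³`. -/
lemma schur_h_integrable (ε : ℝ) (hε0 : 0 < ε) (hε : ε < 1 / 2) :
    Integrable (fun η : EuclideanSpace ℝ (Fin 3) =>
      (1 + ‖η‖ ^ 2) ^ (-(3 : ℝ) / 2 + ε) * ‖η‖ ^ (-(2 + 2 * ε))) := by
  set a : ℝ := (2 + 2 * ε) / 3 with ha
  have ha0 : 0 < a := by rw [ha]; positivity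
  have ha1 : a < 1 := by rw [ha]; rw [div_lt_one (by norm_num)]; linarith
  set g₀ : ℝ → ℝ := fun x =>
      (Ioc (0:ℝ) 1).indicator (fun y => y ^ (-a)) x
        + (Ico (-1:ℝ) 0).indicator (fun y => (-y) ^ (-a)) x with hg0
  have hg0nonneg : ∀ x, 0 ≤ g₀ x := by
    intro x
    apply add_nonneg
    · exact indicator_nonneg (fun y hy => rpow_nonneg hy.1.le _) x
    · exact indicator_nonneg (fun y hy => rpow_nonneg (by simp only [mem_Ico] at hy; linarith) _) x
  have hg0eq : ∀ x : ℝ, x ≠ 0 → |x| ≤ 1 → g₀ x = |x| ^ (-a) := by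
    intro x hx h1
    rcases hx.lt_or_gt with hneg | hpos
    · have habs := abs_le.mp h1
      have hm : x ∈ Ico (-1:ℝ) 0 := ⟨habs.1, hneg⟩
      have hm' : x ∉ Ioc (0:ℝ) 1 := by
        simp only [mem_Ioc, not_and, not_le]; intro h0; linarith
      simp only [hg0, indicator_of_notMem hm', indicator_of_mem hm, abs_of_neg hneg, zero_add]
    · have habs := abs_le.mp h1
      have hm : x ∈ Ioc (0:ℝ) 1 := ⟨hpos, habs.2⟩
      have hm' : x ∉ Ico (-1:ℝ) 0 := by
        simp only [mem_Ico, not_and, not_lt]; intro _; linarith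
      simp only [hg0, indicator_of_mem hm, indicator_of_notMem hm', abs_of_pos hpos, add_zero]
  -- integrability of the two dominating pieces
  have hB1 : Integrable (fun η : EuclideanSpace ℝ (Fin 3) => ∏ i : Fin 3, g₀ (η i)) := by
    have hprod : Integrable (fun x : Fin 3 → ℝ => ∏ i : Fin 3, g₀ (x i)) :=
      Integrable.fintype_prod (f := fun _ : Fin 3 => g₀)
        (fun _ => schur_g0_integrable ha0 ha1)
    have hmp := EuclideanSpace.volume_preserving_symm_measurableEquiv_toLp (Fin 3)
    rw [← hmp.integrable_comp_emb (MeasurableEquiv.toLp 2 (Fin 3 → ℝ)).symm.measurableEmbedding]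
      at hprod
    exact hprod
  have hB2 : Integrable (fun η : EuclideanSpace ℝ (Fin 3) =>
      (2:ℝ) ^ ((1:ℝ) + ε) * (1 + ‖η‖ ^ 2) ^ (-(5:ℝ) / 2)) := by
    have hfr : ((Module.finrank ℝ (EuclideanSpace ℝ (Fin 3)) : ℝ)) < 5 := by
      rw [finrank_euclideanSpace_fin]; norm_num
    exact (integrable_rpow_neg_one_add_norm_sq (E := EuclideanSpace ℝ (Fin 3)) hfr).const_mul _
  -- a.e. coordinates are nonzero
  have haecoord : ∀ᵐ η : EuclideanSpace ℝ (Fin 3), ∀ i : Fin 3, η i ≠ 0 := by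
    rw [ae_all_iff]
    intro i
    rw [ae_iff]
    have hset : {η : EuclideanSpace ℝ (Fin 3) | ¬ η i ≠ 0}
        = (LinearMap.ker ((EuclideanSpace.proj i : EuclideanSpace ℝ (Fin 3) →L[ℝ] ℝ)
            : EuclideanSpace ℝ (Fin 3) →ₗ[ℝ] ℝ) : Set (EuclideanSpace ℝ (Fin 3))) := by
      ext η
      simp [LinearMap.mem_ker]
    rw [hset]
    apply Measure.addHaar_submodule
    intro htop
    have hmem : (EuclideanSpace.single i (1:ℝ)) ∈
        (LinearMap.ker ((EuclideanSpace.proj i : EuclideanSpace ℝ (Fin 3) →L[ℝ] ℝ)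
          : EuclideanSpace ℝ (Fin 3) →ₗ[ℝ] ℝ)) := by
      rw [htop]; trivial
    simp [LinearMap.mem_ker] at hmem
  apply (hB1.add hB2).mono'
  · apply Measurable.aestronglyMeasurable
    fun_prop
  · filter_upwards [haecoord] with η hη
    have hnz : η ≠ 0 := by
      intro h
      exact hη 0 (by rw [h]; rfl)
    have hnorm : 0 < ‖η‖ := norm_pos_iff.mpr hnz
    have habs : ∀ i : Fin 3, |η i| ≤ ‖η‖ := by
      intro i
      rw [EuclideanSpace.norm_eq]
      rw [show |η i| = Real.sqrt (η i ^ 2) from (Real.sqrt_sq_eq_abs _).symm]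
      apply Real.sqrt_le_sqrt
      have hle := Finset.single_le_sum (f := fun j => ‖η j‖ ^ 2)
        (fun j _ => by positivity) (Finset.mem_univ i)
      simpa [Real.norm_eq_abs, sq_abs] using hle
    have hval : 0 ≤ (1 + ‖η‖ ^ 2) ^ (-(3 : ℝ) / 2 + ε) * ‖η‖ ^ (-(2 + 2 * ε)) := by positivity
    rw [Real.norm_eq_abs, abs_of_nonneg hval]
    by_cases hle : ‖η‖ ≤ 1
    · have step1 : (1 + ‖η‖ ^ 2) ^ (-(3 : ℝ) / 2 + ε) ≤ 1 :=
        rpow_le_one_of_one_le_of_nonpos (by nlinarith) (by linarith)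
      have step2 : ‖η‖ ^ (-(2 + 2 * ε)) = ∏ _i : Fin 3, ‖η‖ ^ (-a) := by
        rw [Finset.prod_const, Finset.card_univ, Fintype.card_fin,
          ← Real.rpow_natCast (‖η‖ ^ (-a)) 3, ← Real.rpow_mul hnorm.le]
        congr 1
        rw [ha]; push_cast; ring
      have step3 : (∏ _i : Fin 3, ‖η‖ ^ (-a)) ≤ ∏ i : Fin 3, g₀ (η i) := by
        apply Finset.prod_le_prod (fun i _ => rpow_nonneg hnorm.le _)
        intro i _
        rw [hg0eq (η i) (hη i) ((habs i).trans hle)]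
        exact rpow_le_rpow_of_nonpos (abs_pos.mpr (hη i)) (habs i) (by linarith)
      have hB2nn : 0 ≤ (2:ℝ) ^ ((1:ℝ) + ε) * (1 + ‖η‖ ^ 2) ^ (-(5:ℝ) / 2) := by positivity
      calc (1 + ‖η‖ ^ 2) ^ (-(3 : ℝ) / 2 + ε) * ‖η‖ ^ (-(2 + 2 * ε))
          ≤ 1 * ‖η‖ ^ (-(2 + 2 * ε)) :=
            mul_le_mul_of_nonneg_right step1 (rpow_nonneg hnorm.le _)
        _ = ∏ _i : Fin 3, ‖η‖ ^ (-a) := by rw [one_mul, step2]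
        _ ≤ ∏ i : Fin 3, g₀ (η i) := step3
        _ ≤ (∏ i : Fin 3, g₀ (η i))
            + (2:ℝ) ^ ((1:ℝ) + ε) * (1 + ‖η‖ ^ 2) ^ (-(5:ℝ) / 2) := le_add_of_nonneg_right hB2nn
    · push_neg at hle
      have hB1nn : 0 ≤ ∏ i : Fin 3, g₀ (η i) :=
        Finset.prod_nonneg (fun i _ => hg0nonneg _)
      have hpos2 : (0:ℝ) < (1 + ‖η‖ ^ 2) / 2 := by positivity
      have hstep : ‖η‖ ^ (-(2 + 2 * ε)) ≤ ((1 + ‖η‖ ^ 2) / 2) ^ (-((1:ℝ) + ε)) := by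
        have hbase : Real.sqrt ((1 + ‖η‖ ^ 2) / 2) ≤ ‖η‖ := by
          have h' : (1 + ‖η‖ ^ 2) / 2 ≤ ‖η‖ ^ 2 := by nlinarith
          calc Real.sqrt ((1 + ‖η‖ ^ 2) / 2) ≤ Real.sqrt (‖η‖ ^ 2) := Real.sqrt_le_sqrt h'
            _ = ‖η‖ := Real.sqrt_sq hnorm.le
        calc ‖η‖ ^ (-(2 + 2 * ε))
            ≤ (Real.sqrt ((1 + ‖η‖ ^ 2) / 2)) ^ (-(2 + 2 * ε)) :=
              rpow_le_rpow_of_nonpos (Real.sqrt_pos.mpr hpos2) hbase (by linarith)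
          _ = ((1 + ‖η‖ ^ 2) / 2) ^ (-((1:ℝ) + ε)) := by
              rw [Real.sqrt_eq_rpow, ← Real.rpow_mul hpos2.le]
              congr 1
              ring
      have hsplit : ((1 + ‖η‖ ^ 2) / 2) ^ (-((1:ℝ) + ε))
          = (2:ℝ) ^ ((1:ℝ) + ε) * (1 + ‖η‖ ^ 2) ^ (-((1:ℝ) + ε)) := by
        rw [Real.div_rpow (by positivity) (by norm_num), div_eq_mul_inv,
          ← Real.rpow_neg (by norm_num : (0:ℝ) ≤ 2), neg_neg, mul_comm]
      have hmain : (1 + ‖η‖ ^ 2) ^ (-(3 : ℝ) / 2 + ε) * ‖η‖ ^ (-(2 + 2 * ε))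
          ≤ (2:ℝ) ^ ((1:ℝ) + ε) * (1 + ‖η‖ ^ 2) ^ (-(5:ℝ) / 2) := by
        calc (1 + ‖η‖ ^ 2) ^ (-(3 : ℝ) / 2 + ε) * ‖η‖ ^ (-(2 + 2 * ε))
            ≤ (1 + ‖η‖ ^ 2) ^ (-(3 : ℝ) / 2 + ε)
                * ((2:ℝ) ^ ((1:ℝ) + ε) * (1 + ‖η‖ ^ 2) ^ (-((1:ℝ) + ε))) := by
              apply mul_le_mul_of_nonneg_left _ (by positivity)
              rw [← hsplit]; exact hstep
          _ = (2:ℝ) ^ ((1:ℝ) + ε)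
                * ((1 + ‖η‖ ^ 2) ^ (-(3 : ℝ) / 2 + ε) * (1 + ‖η‖ ^ 2) ^ (-((1:ℝ) + ε))) := by
              ring
          _ = (2:ℝ) ^ ((1:ℝ) + ε) * (1 + ‖η‖ ^ 2) ^ (-(5:ℝ) / 2) := by
              rw [← Real.rpow_add (by positivity)]
              congr 1
              ring
      calc (1 + ‖η‖ ^ 2) ^ (-(3 : ℝ) / 2 + ε) * ‖η‖ ^ (-(2 + 2 * ε))
          ≤ (2:ℝ) ^ ((1:ℝ) + ε) * (1 + ‖η‖ ^ 2) ^ (-(5:ℝ) / 2) := hmain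
        _ ≤ (∏ i : Fin 3, g₀ (η i))
            + (2:ℝ) ^ ((1:ℝ) + ε) * (1 + ‖η‖ ^ 2) ^ (-(5:ℝ) / 2) := le_add_of_nonneg_left hB1nn

/-- Uniform Λ-type Schur-test constant: for fixed `0 < ε < 1/2` there is `C` such that
for all `n ≥ 1` and all `K = (k₁,…,k_n) ∈ ℝ^{3n}`,
`Σᵢ (1+kᵢ²) ∫ (n+1+K²+ξ²)^{-3/2+ε} (1+ξ²)^{-1-ε} dξ ≤ C`. -/
theorem schur_lambda_bound (ε : ℝ) (hε0 : 0 < ε) (hε : ε < 1 / 2) :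
    ∃ C : ℝ, ∀ n : ℕ, 1 ≤ n → ∀ k : Fin n → EuclideanSpace ℝ (Fin 3),
      ∑ i : Fin n, (1 + ‖k i‖ ^ 2) *
        ∫ ξ : EuclideanSpace ℝ (Fin 3),
          ((n : ℝ) + 1 + (∑ j : Fin n, ‖k j‖ ^ 2) + ‖ξ‖ ^ 2) ^ (-(3 : ℝ) / 2 + ε) *
            (1 + ‖ξ‖ ^ 2) ^ (-(1 : ℝ) - ε)
      ≤ C := by
  refine ⟨∫ η : EuclideanSpace ℝ (Fin 3),
      (1 + ‖η‖ ^ 2) ^ (-(3 : ℝ) / 2 + ε) * ‖η‖ ^ (-(2 + 2 * ε)), ?_⟩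
  intro n hn k
  have hK2 : 0 ≤ ∑ j : Fin n, ‖k j‖ ^ 2 := Finset.sum_nonneg (fun j _ => by positivity)
  have hn1 : (1:ℝ) ≤ (n:ℝ) := by exact_mod_cast hn
  obtain ⟨M, hMdef⟩ : ∃ x : ℝ, x = (n : ℝ) + 1 + (∑ j : Fin n, ‖k j‖ ^ 2) := ⟨_, rfl⟩
  have hM2 : (2:ℝ) ≤ M := by rw [hMdef]; linarith
  have hM0 : (0:ℝ) < M := by linarith
  obtain ⟨c, hcdef⟩ : ∃ x : ℝ, x = Real.sqrt M := ⟨_, rfl⟩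
  have hc : 0 < c := by rw [hcdef]; exact Real.sqrt_pos.mpr hM0
  simp only [← hMdef]
  have hint : Integrable (fun η : EuclideanSpace ℝ (Fin 3) =>
      (1 + ‖η‖ ^ 2) ^ (-(3 : ℝ) / 2 + ε) * ‖η‖ ^ (-(2 + 2 * ε))) :=
    schur_h_integrable ε hε0 hε
  -- the key scaling identity
  have key : ∀ x : EuclideanSpace ℝ (Fin 3),
      M * ((M + ‖c • x‖ ^ 2) ^ (-(3 : ℝ) / 2 + ε) * ‖c • x‖ ^ (-(2 + 2 * ε)))
        = M ^ (-(3:ℝ)/2)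
            * ((1 + ‖x‖ ^ 2) ^ (-(3 : ℝ) / 2 + ε) * ‖x‖ ^ (-(2 + 2 * ε))) := by
    intro x
    have hnorm : ‖c • x‖ = c * ‖x‖ := by
      rw [norm_smul, Real.norm_eq_abs, abs_of_pos hc]
    have hsq : ‖c • x‖ ^ 2 = M * ‖x‖ ^ 2 := by
      rw [hnorm, mul_pow, hcdef, Real.sq_sqrt hM0.le]
    have h1 : (M + ‖c • x‖ ^ 2) ^ (-(3 : ℝ) / 2 + ε)
        = M ^ (-(3 : ℝ) / 2 + ε) * (1 + ‖x‖ ^ 2) ^ (-(3 : ℝ) / 2 + ε) := by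
      rw [hsq, show M + M * ‖x‖ ^ 2 = M * (1 + ‖x‖ ^ 2) by ring,
        Real.mul_rpow hM0.le (by positivity)]
    have h2 : ‖c • x‖ ^ (-(2 + 2 * ε)) = M ^ (-((1:ℝ) + ε)) * ‖x‖ ^ (-(2 + 2 * ε)) := by
      rw [hnorm, Real.mul_rpow hc.le (norm_nonneg _), hcdef, Real.sqrt_eq_rpow,
        ← Real.rpow_mul hM0.le]
      congr 2
      ring
    have hM32 : M * (M ^ (-(3:ℝ)/2 + ε) * M ^ (-((1:ℝ) + ε))) = M ^ (-(3:ℝ)/2) := by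
      rw [← Real.rpow_add hM0]
      nth_rewrite 1 [show M = M ^ (1:ℝ) from (Real.rpow_one M).symm]
      rw [← Real.rpow_add hM0]
      congr 1
      ring
    rw [h1, h2, ← hM32]
    ring
  -- integrability of the dominating function
  have hgint : Integrable (fun ξ : EuclideanSpace ℝ (Fin 3) =>
      M * ((M + ‖ξ‖ ^ 2) ^ (-(3 : ℝ) / 2 + ε) * ‖ξ‖ ^ (-(2 + 2 * ε)))) := by
    rw [← integrable_comp_smul_iff volume
      (fun ξ : EuclideanSpace ℝ (Fin 3) =>
        M * ((M + ‖ξ‖ ^ 2) ^ (-(3 : ℝ) / 2 + ε) * ‖ξ‖ ^ (-(2 + 2 * ε)))) hc.ne']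
    simp only [key]
    exact hint.const_mul _
  -- the scaling identity for the integral
  have hc3 : c ^ Module.finrank ℝ (EuclideanSpace ℝ (Fin 3)) = M ^ ((3:ℝ)/2) := by
    rw [finrank_euclideanSpace_fin, ← Real.rpow_natCast c 3, hcdef, Real.sqrt_eq_rpow,
      ← Real.rpow_mul hM0.le]
    norm_num
  have hgval : (∫ ξ : EuclideanSpace ℝ (Fin 3),
        M * ((M + ‖ξ‖ ^ 2) ^ (-(3 : ℝ) / 2 + ε) * ‖ξ‖ ^ (-(2 + 2 * ε))))
      = ∫ η : EuclideanSpace ℝ (Fin 3),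
        (1 + ‖η‖ ^ 2) ^ (-(3 : ℝ) / 2 + ε) * ‖η‖ ^ (-(2 + 2 * ε)) := by
    have hcs := Measure.integral_comp_smul_of_nonneg
      (volume : Measure (EuclideanSpace ℝ (Fin 3)))
      (fun ξ : EuclideanSpace ℝ (Fin 3) =>
        M * ((M + ‖ξ‖ ^ 2) ^ (-(3 : ℝ) / 2 + ε) * ‖ξ‖ ^ (-(2 + 2 * ε)))) c (hR := hc.le)
    rw [hc3] at hcs
    simp only [key, smul_eq_mul] at hcs
    rw [integral_const_mul] at hcs
    have hne : (M ^ ((3:ℝ)/2))⁻¹ ≠ 0 := by positivity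
    have h32 : M ^ (-(3:ℝ)/2) = (M ^ ((3:ℝ)/2))⁻¹ := by
      rw [← Real.rpow_neg hM0.le]
      norm_num
    rw [h32] at hcs
    exact (mul_left_cancel₀ hne hcs).symm
  -- nonnegativity of the inner integral
  have hI0 : 0 ≤ ∫ ξ : EuclideanSpace ℝ (Fin 3),
      (M + ‖ξ‖ ^ 2) ^ (-(3 : ℝ) / 2 + ε) * (1 + ‖ξ‖ ^ 2) ^ (-(1 : ℝ) - ε) :=
    integral_nonneg (fun ξ => by positivity)
  have hsum : ∑ i : Fin n, (1 + ‖k i‖ ^ 2) ≤ M := by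
    rw [Finset.sum_add_distrib, Finset.sum_const, Finset.card_univ, Fintype.card_fin,
      nsmul_eq_mul, mul_one, hMdef]
    linarith
  -- a.e. comparison
  have hae : ∀ᵐ ξ : EuclideanSpace ℝ (Fin 3),
      M * ((M + ‖ξ‖ ^ 2) ^ (-(3 : ℝ) / 2 + ε) * (1 + ‖ξ‖ ^ 2) ^ (-(1 : ℝ) - ε))
        ≤ M * ((M + ‖ξ‖ ^ 2) ^ (-(3 : ℝ) / 2 + ε) * ‖ξ‖ ^ (-(2 + 2 * ε))) := by
    have hzero : ∀ᵐ ξ : EuclideanSpace ℝ (Fin 3), ξ ≠ 0 := by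
      rw [ae_iff]
      have hset : {ξ : EuclideanSpace ℝ (Fin 3) | ¬ ξ ≠ 0}
          = {(0 : EuclideanSpace ℝ (Fin 3))} := by
        ext ξ; simp
      rw [hset]
      exact measure_singleton _
    filter_upwards [hzero] with ξ hξ
    have hnξ : 0 < ‖ξ‖ := norm_pos_iff.mpr hξ
    have hkey : (1 + ‖ξ‖ ^ 2) ^ (-(1 : ℝ) - ε) ≤ ‖ξ‖ ^ (-(2 + 2 * ε)) := by
      have h1 : ‖ξ‖ ^ (-(2 + 2 * ε)) = (‖ξ‖ ^ 2 : ℝ) ^ (-(1:ℝ) - ε) := by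
        rw [← Real.rpow_natCast ‖ξ‖ 2, ← Real.rpow_mul (norm_nonneg _)]
        congr 1
        push_cast
        ring
      rw [h1]
      exact rpow_le_rpow_of_nonpos (by positivity) (by nlinarith) (by linarith)
    have hA : (0:ℝ) ≤ (M + ‖ξ‖ ^ 2) ^ (-(3 : ℝ) / 2 + ε) :=
      Real.rpow_nonneg (by positivity) _
    exact mul_le_mul_of_nonneg_left (mul_le_mul_of_nonneg_left hkey hA) hM0.le
  calc ∑ i : Fin n, (1 + ‖k i‖ ^ 2) *
        ∫ ξ : EuclideanSpace ℝ (Fin 3),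
          (M + ‖ξ‖ ^ 2) ^ (-(3 : ℝ) / 2 + ε) * (1 + ‖ξ‖ ^ 2) ^ (-(1 : ℝ) - ε)
      = (∑ i : Fin n, (1 + ‖k i‖ ^ 2)) *
        ∫ ξ : EuclideanSpace ℝ (Fin 3),
          (M + ‖ξ‖ ^ 2) ^ (-(3 : ℝ) / 2 + ε) * (1 + ‖ξ‖ ^ 2) ^ (-(1 : ℝ) - ε) :=
        (Finset.sum_mul _ _ _).symm
    _ ≤ M * ∫ ξ : EuclideanSpace ℝ (Fin 3),
          (M + ‖ξ‖ ^ 2) ^ (-(3 : ℝ) / 2 + ε) * (1 + ‖ξ‖ ^ 2) ^ (-(1 : ℝ) - ε) :=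
        mul_le_mul_of_nonneg_right hsum hI0
    _ = ∫ ξ : EuclideanSpace ℝ (Fin 3),
          M * ((M + ‖ξ‖ ^ 2) ^ (-(3 : ℝ) / 2 + ε) * (1 + ‖ξ‖ ^ 2) ^ (-(1 : ℝ) - ε)) :=
        (integral_const_mul _ _).symm
    _ ≤ ∫ ξ : EuclideanSpace ℝ (Fin 3),
          M * ((M + ‖ξ‖ ^ 2) ^ (-(3 : ℝ) / 2 + ε) * ‖ξ‖ ^ (-(2 + 2 * ε))) := by
        apply integral_mono_of_nonneg _ hgint hae
        filter_upwards with ξ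
        positivity
    _ = ∫ η : EuclideanSpace ℝ (Fin 3),
          (1 + ‖η‖ ^ 2) ^ (-(3 : ℝ) / 2 + ε) * ‖η‖ ^ (-(2 + 2 * ε)) := hgval
end

section
/- For 0 < s ≤ 1/2, n ∈ ℕ, and K = (k₁,…,k_{n+1}) ∈ ℝ^{3(n+1)}, the integral ∫_{ℝ³} (n+1+K²)^{-2} dk_{n+1} (with K² including k_{n+1}²) satisfies √(n+1) · ( ∫_{ℝ³} (n+1 + |k̂|² + |k_{n+1}|²)^{-2} dk_{n+1} )^{1/2} ≤ C (n+1)^{1/4+s}/√s uniformly in k̂ ∈ ℝ^{3n}, for an absolute constant C. -/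
open MeasureTheory Real

namespace AnnRes

open Set

local notation "E3" => EuclideanSpace ℝ (Fin 3)

lemma one_dim (s : ℝ) (hs : 0 < s) :
    IntegrableOn (fun y : ℝ => (1 + y) ^ (-(1 + 2*s))) (Ioi (0:ℝ)) ∧
    ∫ y in Ioi (0:ℝ), (1 + y) ^ (-(1 + 2*s)) = 1 / (2*s) := by
  have ha : -(1 + 2*s) < -1 := by linarith
  have hmp := measurePreserving_add_right (volume : Measure ℝ) 1
  have hme := (MeasurableEquiv.addRight (1:ℝ)).measurableEmbedding
  have himg : (fun x : ℝ => x + 1) '' Ioi 0 = Ioi 1 := by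
    rw [Set.image_add_const_Ioi]; norm_num
  constructor
  · have h2 : IntegrableOn (fun x : ℝ => x ^ (-(1 + 2*s))) (Ioi 1) :=
      integrableOn_Ioi_rpow_of_lt ha one_pos
    have := (hmp.restrict_image_emb hme (Ioi 0)).integrable_comp_emb hme
      (g := fun x : ℝ => x ^ (-(1 + 2*s)))
    rw [himg] at this
    have h3 := this.2 h2
    have h4 : (fun y : ℝ => (1 + y) ^ (-(1 + 2*s))) =
        (fun x : ℝ => x ^ (-(1 + 2*s))) ∘ (fun x : ℝ => x + 1) := by
      funext y; simp only [Function.comp]; ring_nf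
    rw [h4]; exact h3
  · have := hmp.setIntegral_image_emb hme (fun x : ℝ => x ^ (-(1 + 2*s))) (Ioi 0)
    rw [himg] at this
    rw [show (fun y : ℝ => (1+y) ^ (-(1+2*s))) = fun y : ℝ => ((y+1):ℝ) ^ (-(1+2*s)) from
      funext fun y => by ring_nf]
    rw [← this, integral_Ioi_rpow_of_lt ha one_pos, Real.one_rpow]
    field_simp
    ring

lemma radial (s : ℝ) (hs : 0 < s) :
    ∫ y in Ioi (0:ℝ), y ^ 2 * (1 + y) ^ (-(3 + 2*s)) ≤ 1 / (2*s) := by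
  obtain ⟨hint, hval⟩ := one_dim s hs
  rw [← hval]
  refine integral_mono_of_nonneg ?_ hint ?_
  · rw [Filter.EventuallyLE, ae_restrict_iff' measurableSet_Ioi]
    filter_upwards with y hy
    have h1y : (0:ℝ) < 1 + y := by have : (0:ℝ) < y := hy; linarith
    positivity
  · rw [Filter.EventuallyLE, ae_restrict_iff' measurableSet_Ioi]
    filter_upwards with y hy
    have hy0 : (0:ℝ) < y := hy
    have h1y : (0:ℝ) < 1 + y := by linarith
    have key : (1 + y) ^ (-(3 + 2*s)) = (1 + y) ^ (-(2:ℝ)) * (1 + y) ^ (-(1 + 2*s)) := by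
      rw [← Real.rpow_add h1y]; ring_nf
    rw [key, ← mul_assoc]
    have h2 : y ^ 2 * (1 + y) ^ (-(2:ℝ)) ≤ 1 := by
      rw [Real.rpow_neg h1y.le, show ((2:ℝ)) = ((2:ℕ):ℝ) by norm_num, Real.rpow_natCast]
      rw [mul_inv_le_iff₀ (by positivity), one_mul]
      have : y ≤ 1 + y := by linarith
      exact pow_le_pow_left₀ hy0.le this 2
    calc y ^ 2 * (1 + y) ^ (-(2:ℝ)) * (1 + y) ^ (-(1 + 2*s))
        ≤ 1 * (1 + y) ^ (-(1 + 2*s)) := by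
          apply mul_le_mul_of_nonneg_right h2 (by positivity)
      _ = (1 + y) ^ (-(1 + 2*s)) := one_mul _

end AnnRes

namespace AnnRes
open Set Metric

lemma integral_E3 (s : ℝ) (hs : 0 < s) :
    ∫ x : EuclideanSpace ℝ (Fin 3), (1 + ‖x‖) ^ (-(3 + 2*s)) ≤
      3 * (volume (ball (0 : EuclideanSpace ℝ (Fin 3)) 1)).toReal * (1/(2*s)) := by
  rw [MeasureTheory.integral_fun_norm_addHaar (volume : Measure (EuclideanSpace ℝ (Fin 3)))
    (fun y => (1+y) ^ (-(3+2*s)))]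
  simp only [finrank_euclideanSpace_fin, nsmul_eq_mul, smul_eq_mul, Nat.cast_ofNat]
  rw [mul_assoc]
  gcongr
  · exact setIntegral_nonneg measurableSet_Ioi fun y hy => by
      have : (0:ℝ) < y := hy; positivity
  · exact le_rfl
  have := radial s hs
  norm_num at this ⊢
  exact this

end AnnRes

open AnnRes Set Metric



open MeasureTheory Real

/-- Bound for the operator norm of `a(δ_x) L⁻¹`: there is an absolute constant `C` such that
for all `0 < s ≤ 1/2`, `n ∈ ℕ` and `k̂ ∈ ℝ^{3n}`,
`√(n+1) (∫ (n+1+|k̂|²+|k_{n+1}|²)⁻² dk_{n+1})^{1/2} ≤ C (n+1)^{1/4+s}/√s`. -/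
theorem annihilation_resolvent_bound :
    ∃ C : ℝ, 0 < C ∧ ∀ s : ℝ, 0 < s → s ≤ 1 / 2 → ∀ n : ℕ,
      ∀ khat : Fin n → EuclideanSpace ℝ (Fin 3),
        Real.sqrt ((n : ℝ) + 1) *
          Real.sqrt (∫ ξ : EuclideanSpace ℝ (Fin 3),
            ((n : ℝ) + 1 + (∑ j : Fin n, ‖khat j‖ ^ 2) + ‖ξ‖ ^ 2) ^ (-(2 : ℝ)))
        ≤ C * ((n : ℝ) + 1) ^ ((1 : ℝ) / 4 + s) / Real.sqrt s := by
  set V : ℝ := (volume (ball (0 : EuclideanSpace ℝ (Fin 3)) 1)).toReal with hV_def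
  have hV : 0 < V := ENNReal.toReal_pos (measure_ball_pos volume _ one_pos).ne'
    measure_ball_lt_top.ne
  refine ⟨Real.sqrt (6 * V), Real.sqrt_pos.mpr (by positivity), ?_⟩
  intro s hs hs2 n khat
  have hsum : (0:ℝ) ≤ ∑ j : Fin n, ‖khat j‖ ^ 2 :=
    Finset.sum_nonneg fun j _ => sq_nonneg _
  set a : ℝ := (n:ℝ) + 1 + ∑ j : Fin n, ‖khat j‖ ^ 2 with ha_def
  have hn1 : (0:ℝ) < (n:ℝ) + 1 := by positivity
  have han : (n:ℝ) + 1 ≤ a := by simp [ha_def]; linarith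
  have ha1 : (1:ℝ) ≤ a := le_trans (by simp) han
  have ha0 : (0:ℝ) < a := lt_of_lt_of_le one_pos ha1
  -- pointwise bound
  have hpt : ∀ ξ : EuclideanSpace ℝ (Fin 3),
      (a + ‖ξ‖ ^ 2) ^ (-(2:ℝ)) ≤ (a ^ (s - 1/2) * 4) * (1 + ‖ξ‖) ^ (-(3 + 2*s)) := by
    intro ξ
    have hx : (0:ℝ) ≤ ‖ξ‖ ^ 2 := sq_nonneg _
    have h1 : (0:ℝ) < a + ‖ξ‖ ^ 2 := by linarith
    have e1 : (a + ‖ξ‖ ^ 2) ^ (-(2:ℝ))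
        = (a + ‖ξ‖ ^ 2) ^ (s - 1/2) * (a + ‖ξ‖ ^ 2) ^ (-(3/2 + s)) := by
      rw [← Real.rpow_add h1]; ring_nf
    have b1 : (a + ‖ξ‖ ^ 2) ^ (s - 1/2) ≤ a ^ (s - 1/2) :=
      Real.rpow_le_rpow_of_nonpos ha0 (by linarith) (by linarith)
    have b2 : (a + ‖ξ‖ ^ 2) ^ (-(3/2 + s)) ≤ (1 + ‖ξ‖ ^ 2) ^ (-(3/2 + s)) :=
      Real.rpow_le_rpow_of_nonpos (by positivity) (by linarith) (by linarith)
    have b3 : (1 + ‖ξ‖ ^ 2) ^ (-(3/2 + s)) ≤ 2 ^ ((3 + 2*s)/2) * (1 + ‖ξ‖) ^ (-(3 + 2*s)) := by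
      have h := rpow_neg_one_add_norm_sq_le ξ (r := 3 + 2*s) (by linarith)
      have : -(3/2 + s) = -(3 + 2*s)/2 := by ring
      rw [this]; exact h
    have b4 : (2:ℝ) ^ ((3 + 2*s)/2) ≤ 4 := by
      have h24 : (2:ℝ) ^ (2:ℝ) = 4 := by
        rw [show (2:ℝ) = ((2:ℕ):ℝ) from by norm_num, Real.rpow_natCast]; norm_num
      calc (2:ℝ) ^ ((3 + 2*s)/2) ≤ 2 ^ (2:ℝ) :=
            Real.rpow_le_rpow_of_exponent_le one_le_two (by linarith)
        _ = 4 := h24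
    have hnn : (0:ℝ) ≤ (1 + ‖ξ‖) ^ (-(3 + 2*s)) := Real.rpow_nonneg (by positivity) _
    calc (a + ‖ξ‖ ^ 2) ^ (-(2:ℝ))
        = (a + ‖ξ‖ ^ 2) ^ (s - 1/2) * (a + ‖ξ‖ ^ 2) ^ (-(3/2 + s)) := e1
      _ ≤ a ^ (s - 1/2) * (2 ^ ((3 + 2*s)/2) * (1 + ‖ξ‖) ^ (-(3 + 2*s))) :=
          mul_le_mul b1 (b2.trans b3) (Real.rpow_nonneg h1.le _)
            (Real.rpow_nonneg ha0.le _)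
      _ ≤ a ^ (s - 1/2) * (4 * (1 + ‖ξ‖) ^ (-(3 + 2*s))) := by
          apply mul_le_mul_of_nonneg_left _ (Real.rpow_nonneg ha0.le _)
          exact mul_le_mul_of_nonneg_right b4 hnn
      _ = (a ^ (s - 1/2) * 4) * (1 + ‖ξ‖) ^ (-(3 + 2*s)) := by ring
  -- integrability of the dominating function
  have hgint : Integrable (fun ξ : EuclideanSpace ℝ (Fin 3) =>
      (a ^ (s - 1/2) * 4) * (1 + ‖ξ‖) ^ (-(3 + 2*s))) := by
    apply Integrable.const_mul
    apply integrable_one_add_norm (μ := volume)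
    rw [finrank_euclideanSpace_fin]
    push_cast; linarith
  -- integral bound
  have hIf : ∫ ξ : EuclideanSpace ℝ (Fin 3), (a + ‖ξ‖ ^ 2) ^ (-(2:ℝ))
      ≤ ((n:ℝ) + 1) ^ (s - 1/2) * (6 * V / s) := by
    have h1 : ∫ ξ : EuclideanSpace ℝ (Fin 3), (a + ‖ξ‖ ^ 2) ^ (-(2:ℝ))
        ≤ ∫ ξ : EuclideanSpace ℝ (Fin 3), (a ^ (s - 1/2) * 4) * (1 + ‖ξ‖) ^ (-(3 + 2*s)) :=
      integral_mono_of_nonneg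
        (Filter.Eventually.of_forall fun ξ => Real.rpow_nonneg (by positivity) _)
        hgint (Filter.Eventually.of_forall hpt)
    rw [integral_const_mul] at h1
    have h2 := integral_E3 s hs
    calc ∫ ξ : EuclideanSpace ℝ (Fin 3), (a + ‖ξ‖ ^ 2) ^ (-(2:ℝ))
        ≤ (a ^ (s - 1/2) * 4) * ∫ ξ : EuclideanSpace ℝ (Fin 3), (1 + ‖ξ‖) ^ (-(3 + 2*s)) := h1
      _ ≤ (a ^ (s - 1/2) * 4) * (3 * V * (1/(2*s))) := by
          apply mul_le_mul_of_nonneg_left h2 (by positivity)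
      _ ≤ (((n:ℝ) + 1) ^ (s - 1/2) * 4) * (3 * V * (1/(2*s))) := by
          apply mul_le_mul_of_nonneg_right _ (by positivity)
          apply mul_le_mul_of_nonneg_right _ (by norm_num)
          exact Real.rpow_le_rpow_of_nonpos hn1 han (by linarith)
      _ = ((n:ℝ) + 1) ^ (s - 1/2) * (6 * V / s) := by
          field_simp; ring
  -- assemble
  have hsq : Real.sqrt (∫ ξ : EuclideanSpace ℝ (Fin 3), (a + ‖ξ‖ ^ 2) ^ (-(2:ℝ)))
      ≤ ((n:ℝ) + 1) ^ ((s - 1/2)/2) * (Real.sqrt (6 * V) / Real.sqrt s) := by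
    refine le_trans (Real.sqrt_le_sqrt hIf) (le_of_eq ?_)
    rw [Real.sqrt_mul (Real.rpow_nonneg hn1.le _), Real.sqrt_div (by positivity : (0:ℝ) ≤ 6 * V),
      Real.sqrt_eq_rpow (((n:ℝ) + 1) ^ (s - 1/2)), ← Real.rpow_mul hn1.le]
    norm_num
    left; congr 1; ring
  calc Real.sqrt ((n : ℝ) + 1) *
        Real.sqrt (∫ ξ : EuclideanSpace ℝ (Fin 3), (a + ‖ξ‖ ^ 2) ^ (-(2:ℝ)))
      ≤ Real.sqrt ((n : ℝ) + 1) *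
        (((n:ℝ) + 1) ^ ((s - 1/2)/2) * (Real.sqrt (6 * V) / Real.sqrt s)) :=
        mul_le_mul_of_nonneg_left hsq (Real.sqrt_nonneg _)
    _ = ((n:ℝ) + 1) ^ ((1:ℝ)/4 + s/2) * (Real.sqrt (6 * V) / Real.sqrt s) := by
        rw [Real.sqrt_eq_rpow, ← mul_assoc, ← Real.rpow_add hn1]
        norm_num
        left; congr 1; ring
    _ ≤ ((n:ℝ) + 1) ^ ((1:ℝ)/4 + s) * (Real.sqrt (6 * V) / Real.sqrt s) := by
        apply mul_le_mul_of_nonneg_right _ (by positivity)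
        exact Real.rpow_le_rpow_of_exponent_le (by linarith) (by linarith)
    _ = Real.sqrt (6 * V) * ((n:ℝ) + 1) ^ ((1:ℝ)/4 + s) / Real.sqrt s := by ring
end
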